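/- Let 0 < α₁, α₂ < 1 and c > 0. The function Ψ_{α₁,α₂}(s) = s^{−(α₂c+α₁s)/(c+s)} (principal branch) is analytic on ℂ ∖ (−∞, 0] and satisfies the sectorial bound: for each d > 0 there exists M < ∞ such that |Ψ_{α₁,α₂}(s)| ≤ M |s|^{−α₁} for all s with Re(s) ≥ d. -/

import Mathlib

theorem Psi_analytic_and_sectorial_bound
    (α₁ α₂ c : ℝ) (h1 : 0 < α₁) (h1' : α₁ < 1) (h2 : 0 < α₂) (h2' : α₂ < 1)
    (hc : 0 < c) :
    AnalyticOn ℂ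
      (fun s : ℂ => s ^ (-((α₂ * c + α₁ * s) / ((c : ℂ) + s))))
      Complex.slitPlane ∧
    ∀ d : ℝ, 0 < d → ∃ M : ℝ,
      ∀ s : ℂ, d ≤ s.re →
        ‖s ^ (-((α₂ * c + α₁ * s) / ((c : ℂ) + s)))‖
          ≤ M * ‖s‖ ^ (-α₁) := by
  constructor
  · -- analyticity
    apply AnalyticOn.cpow (analyticOn_id)
    · apply AnalyticOn.neg
      apply AnalyticOn.div
      · exact (analyticOn_const.mul analyticOn_const).add
          (analyticOn_const.mul analyticOn_id)
      · exact analyticOn_const.add analyticOn_id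
      · intro z hz
        intro h0
        have : z = -c := by linear_combination h0
        subst this
        rcases Complex.mem_slitPlane_iff.mp hz with h | h
        · simp only [Complex.neg_re, Complex.ofReal_re] at h; linarith
        · simp only [Complex.neg_im, Complex.ofReal_im, neg_zero, ne_eq] at h
          exact h trivial
    · exact fun z hz => hz
  · intro d hd
    set A : ℝ := |α₂ - α₁| * c with hA
    have hA0 : 0 ≤ A := mul_nonneg (abs_nonneg _) hc.le
    set B : ℝ := A * ((|Real.log d| + Real.pi / 2) / (c + d) + 1) with hB
    refine ⟨Real.exp B, fun s hs => ?_⟩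
    have hsre : 0 < s.re := lt_of_lt_of_le hd hs
    have hs0 : s ≠ 0 := by
      intro h; rw [h] at hsre; simp at hsre
    have habs : d ≤ ‖s‖ := le_trans hs (Complex.re_le_norm s)
    have habs0 : 0 < ‖s‖ := lt_of_lt_of_le hd habs
    have hcs : ((c : ℂ) + s) ≠ 0 := by
      intro h
      have : ((c : ℂ) + s).re = 0 := by rw [h]; simp
      simp only [Complex.add_re, Complex.ofReal_re] at this
      linarith
    -- decomposition of the exponent
    set g : ℂ := -(((α₂ : ℂ) - α₁) * c / ((c : ℂ) + s)) with hg
    have hdecomp : -((α₂ * c + α₁ * s) / ((c : ℂ) + s)) = ((-α₁ : ℝ) : ℂ) + g := by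
      rw [hg]
      field_simp
      push_cast
      ring
    rw [hdecomp, Complex.cpow_add _ _ hs0, norm_mul, Complex.norm_cpow_real]
    rw [mul_comm (Real.exp B)]
    apply mul_le_mul_of_nonneg_left _ (Real.rpow_nonneg habs0.le _)
    -- bound |s ^ g| ≤ exp B
    have hsg : s ^ g = Complex.exp (Complex.log s * g) := by
      rw [Complex.cpow_def_of_ne_zero hs0]
    rw [hsg, Complex.norm_exp]
    apply Real.exp_le_exp.mpr
    calc (Complex.log s * g).re ≤ ‖Complex.log s * g‖ :=
          Complex.re_le_norm _
      _ = ‖Complex.log s‖ * ‖g‖ := norm_mul _ _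
      _ ≤ (|Real.log d| + Real.pi / 2 + ‖s‖) *
            (A / ‖(c : ℂ) + s‖) := by
          apply mul_le_mul
          · -- |log s| ≤ |log d| + π/2 + |s|
            calc ‖Complex.log s‖
                ≤ |(Complex.log s).re| + |(Complex.log s).im| :=
                  Complex.norm_le_abs_re_add_abs_im _
              _ = |Real.log (‖s‖)| + |Complex.arg s| := by
                  rw [Complex.log_re, Complex.log_im]
              _ ≤ (|Real.log d| + ‖s‖) + Real.pi / 2 := by
                  gcongr
                  · -- |log t| ≤ |log d| + t for t ≥ d
                    rcases le_total (‖s‖) 1 with h | h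
                    · have h1 : Real.log (‖s‖) ≤ 0 :=
                        Real.log_nonpos habs0.le h
                      have h2 : Real.log d ≤ Real.log (‖s‖) :=
                        Real.log_le_log hd habs
                      rw [abs_of_nonpos h1]
                      calc -Real.log (‖s‖) ≤ -Real.log d := by linarith
                        _ ≤ |Real.log d| := neg_le_abs _
                        _ ≤ |Real.log d| + ‖s‖ := by linarith
                    · have h1 : 0 ≤ Real.log (‖s‖) := Real.log_nonneg h
                      rw [abs_of_nonneg h1]
                      have := Real.log_le_sub_one_of_pos habs0
                      have : Real.log (‖s‖) ≤ ‖s‖ := by linarith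
                      calc Real.log (‖s‖) ≤ ‖s‖ := this
                        _ ≤ |Real.log d| + ‖s‖ := by
                            linarith [abs_nonneg (Real.log d)]
                  · exact (Complex.abs_arg_le_pi_div_two_iff).mpr hsre.le
              _ = |Real.log d| + Real.pi / 2 + ‖s‖ := by ring
          · -- |g| = A / |c+s|
            rw [hg, norm_neg, norm_div, norm_mul]
            have heq : ‖(α₂ : ℂ) - α₁‖ * ‖((c : ℝ) : ℂ)‖ = A := by
              rw [← Complex.ofReal_sub, Complex.norm_real, Complex.norm_real, Real.norm_eq_abs, Real.norm_eq_abs,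
                abs_of_pos hc, hA]
            rw [heq]
          · exact norm_nonneg _
          · positivity
      _ ≤ B := by
          -- split: (X + t) * (A / D) with D ≥ c+d and D ≥ t
          have hD1 : c + d ≤ ‖(c : ℂ) + s‖ := by
            calc c + d ≤ ((c : ℂ) + s).re := by
                  simp only [Complex.add_re, Complex.ofReal_re]; linarith
              _ ≤ ‖(c : ℂ) + s‖ := Complex.re_le_norm _
          have hD2 : ‖s‖ ≤ ‖(c : ℂ) + s‖ := by
            rw [Complex.norm_def, Complex.norm_def]
            apply Real.sqrt_le_sqrt
            rw [Complex.normSq_apply, Complex.normSq_apply]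
            simp only [Complex.add_re, Complex.add_im, Complex.ofReal_re,
              Complex.ofReal_im, zero_add]
            nlinarith
          have hcd : (0:ℝ) < c + d := by linarith
          have hD0 : (0:ℝ) < ‖(c : ℂ) + s‖ := lt_of_lt_of_le hcd hD1
          set X : ℝ := |Real.log d| + Real.pi / 2 with hX
          have hX0 : 0 ≤ X := by
            have := Real.pi_pos
            have := abs_nonneg (Real.log d)
            rw [hX]; linarith
          have key : (X + ‖s‖) * (A / ‖(c : ℂ) + s‖)
              = A * (X / ‖(c : ℂ) + s‖)
                + A * (‖s‖ / ‖(c : ℂ) + s‖) := by ring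
          rw [key, hB]
          have h₁ : X / ‖(c : ℂ) + s‖ ≤ X / (c + d) :=
            div_le_div_of_nonneg_left hX0 hcd hD1 |>.trans_eq rfl
          have h₂ : ‖s‖ / ‖(c : ℂ) + s‖ ≤ 1 :=
            div_le_one_of_le₀ hD2 hD0.le
          have : A * (X / ‖(c : ℂ) + s‖) ≤ A * (X / (c + d)) :=
            mul_le_mul_of_nonneg_left h₁ hA0
          have : A * (‖s‖ / ‖(c : ℂ) + s‖) ≤ A * 1 :=
            mul_le_mul_of_nonneg_left h₂ hA0
          calc A * (X / ‖(c : ℂ) + s‖)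
                + A * (‖s‖ / ‖(c : ℂ) + s‖)
              ≤ A * (X / (c + d)) + A * 1 := by
                gcongr
            _ = A * ((|Real.log d| + Real.pi / 2) / (c + d) + 1) := by rw [hX]; ring
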